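/- Let S₁ < S₂ be the two real roots of c S² + (cα − δ − λ) S − δα = 0 and let h(x) := (S₁+α) e^{S₁ x} − (S₂+α) e^{S₂ x}. Then h satisfies the integro-differential equation c h'(x) − (δ+λ) h(x) + λ ∫₀ˣ h(x−y) α e^{−α y} dy = 0 for all x ≥ 0. -/

import Mathlib

open Real


lemma integral_exp_mul_real {k : ℝ} (hk : k ≠ 0) (x : ℝ) :
    ∫ y in (0:ℝ)..x, Real.exp (k * y) = (Real.exp (k * x) - 1) / k := by
  rw [intervalIntegral.integral_comp_mul_left (fun y => Real.exp y) hk]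
  simp [integral_exp, smul_eq_mul]
  ring



/-- With `S₁ < S₂` the two real roots of `c S² + (cα − δ − λ) S − δα = 0`,
the function `h(x) = (S₁+α) e^{S₁ x} − (S₂+α) e^{S₂ x}` satisfies
`c h'(x) − (δ+λ) h(x) + λ ∫₀ˣ h(x−y) α e^{−α y} dy = 0` for all `x ≥ 0`. -/
theorem h_solves_integro_differential_equation
    (c lam δ α S₁ S₂ : ℝ) (hc : 0 < c) (hlam : 0 < lam) (hδ : 0 < δ) (hα : 0 < α)
    (hS : S₁ < S₂)
    (hroot1 : c * S₁ ^ 2 + (c * α - δ - lam) * S₁ - δ * α = 0)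
    (hroot2 : c * S₂ ^ 2 + (c * α - δ - lam) * S₂ - δ * α = 0)
    (hS1 : -α < S₁) (hS1' : S₁ < 0) (hS2 : 0 < S₂) :
    ∀ x ≥ (0:ℝ),
      c * deriv (fun t => (S₁ + α) * Real.exp (S₁ * t) - (S₂ + α) * Real.exp (S₂ * t)) x
        - (δ + lam) * ((S₁ + α) * Real.exp (S₁ * x) - (S₂ + α) * Real.exp (S₂ * x))
        + lam * ∫ y in (0:ℝ)..x,
            ((S₁ + α) * Real.exp (S₁ * (x - y)) - (S₂ + α) * Real.exp (S₂ * (x - y)))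
              * (α * Real.exp (-α * y)) = 0 := by
  intro x hx
  have hk1 : S₁ + α ≠ 0 := by linarith
  have hk2 : S₂ + α ≠ 0 := by linarith
  have hk1' : -(S₁ + α) ≠ 0 := neg_ne_zero.mpr hk1
  have hk2' : -(S₂ + α) ≠ 0 := neg_ne_zero.mpr hk2
  -- derivative
  have e1 : HasDerivAt (fun t => Real.exp (S₁ * t)) (Real.exp (S₁ * x) * S₁) x := by
    simpa [Function.comp_def] using (Real.hasDerivAt_exp (S₁ * x)).comp x ((hasDerivAt_id x).const_mul S₁)
  have e2 : HasDerivAt (fun t => Real.exp (S₂ * t)) (Real.exp (S₂ * x) * S₂) x := by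
    simpa [Function.comp_def] using (Real.hasDerivAt_exp (S₂ * x)).comp x ((hasDerivAt_id x).const_mul S₂)
  have hd : deriv (fun t => (S₁ + α) * Real.exp (S₁ * t) - (S₂ + α) * Real.exp (S₂ * t)) x
      = (S₁ + α) * (Real.exp (S₁ * x) * S₁) - (S₂ + α) * (Real.exp (S₂ * x) * S₂) :=
    ((e1.const_mul (S₁ + α)).sub (e2.const_mul (S₂ + α))).deriv
  -- integral
  have hint : (∫ y in (0:ℝ)..x,
        ((S₁ + α) * Real.exp (S₁ * (x - y)) - (S₂ + α) * Real.exp (S₂ * (x - y)))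
          * (α * Real.exp (-α * y)))
      = α * (Real.exp (S₁ * x) - Real.exp (S₂ * x)) := by
    have ei : ∀ y : ℝ, ((S₁ + α) * Real.exp (S₁ * (x - y)) - (S₂ + α) * Real.exp (S₂ * (x - y)))
          * (α * Real.exp (-α * y))
        = ((S₁ + α) * α * Real.exp (S₁ * x)) * Real.exp (-(S₁ + α) * y)
          - ((S₂ + α) * α * Real.exp (S₂ * x)) * Real.exp (-(S₂ + α) * y) := by
      intro y
      rw [show S₁ * (x - y) = S₁ * x + -(S₁ + α) * y + α * y by ring,
          show S₂ * (x - y) = S₂ * x + -(S₂ + α) * y + α * y by ring,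
          show -α * y = -(α * y) by ring]
      rw [Real.exp_add, Real.exp_add, Real.exp_add, Real.exp_add, Real.exp_neg]
      have : Real.exp (α * y) ≠ 0 := Real.exp_ne_zero _
      field_simp
    rw [intervalIntegral.integral_congr (fun y _ => ei y)]
    rw [intervalIntegral.integral_sub
        (((by fun_prop : Continuous fun y : ℝ => Real.exp (-(S₁ + α) * y)).intervalIntegrable 0 x).const_mul _)
        (((by fun_prop : Continuous fun y : ℝ => Real.exp (-(S₂ + α) * y)).intervalIntegrable 0 x).const_mul _)]
    rw [intervalIntegral.integral_const_mul, intervalIntegral.integral_const_mul,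
        integral_exp_mul_real hk1', integral_exp_mul_real hk2']
    rw [show (-(S₁ + α) * x) = (-(α * x)) + (-(S₁ * x)) by ring,
        show (-(S₂ + α) * x) = (-(α * x)) + (-(S₂ * x)) by ring,
        Real.exp_add, Real.exp_add, Real.exp_neg (S₁ * x), Real.exp_neg (S₂ * x)]
    set E1 := Real.exp (S₁ * x) with hE1
    set E2 := Real.exp (S₂ * x) with hE2
    set A := Real.exp (-(α * x)) with hA
    have h1 : E1 ≠ 0 := Real.exp_ne_zero _
    have h2 : E2 ≠ 0 := Real.exp_ne_zero _
    have key : ∀ a E : ℝ, a ≠ 0 → E ≠ 0 →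
        a * α * E * ((A * E⁻¹ - 1) / (-a)) = α * E - α * A := by
      intro a E ha hE
      field_simp
      ring
    rw [key _ _ hk1 h1, key _ _ hk2 h2]
    ring
  rw [hd, hint]
  nlinarith [hroot1, hroot2, Real.exp_pos (S₁ * x), Real.exp_pos (S₂ * x),
    mul_self_nonneg (Real.exp (S₁ * x) - Real.exp (S₂ * x))]
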